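/- Let n > 2 and let K_12 = (S_n ∪ {g_1}, S_n ∪ {m_1,m_2}, I) be the formal context in which (g,m) ∈ I iff g,m ∈ S_n and g ≠ m, or g = g_1 and m ∈ S_n, or g ∈ m_1' and m = m_1, or g ∈ m_2' and m = m_2, where m_1', m_2' ⊆ S_n satisfy m_1' ∪ m_2' = S_n, ∅ ⊊ m_1', m_2' ⊊ S_n, and m_1', m_2' are incomparable (m_1' ⊄ m_2' and m_2' ⊄ m_1'). Then |𝔅(K_12)| = 2^n + 2^{|m_1'|} + 2^{|m_2'|} − 2^{|m_1' ∩ m_2'|}. -/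
import Mathlib

/-- The intent (attribute derivation) of a set of objects. -/
def intentOf {G M : Type*} (I : G → M → Prop) (A : Set G) : Set M :=
  {m | ∀ g ∈ A, I g m}

/-- The extent (object derivation) of a set of attributes. -/
def extentOf {G M : Type*} (I : G → M → Prop) (B : Set M) : Set G :=
  {g | ∀ m ∈ B, I g m}

/-- The formal concepts of a context: pairs `(A, B)` with `A' = B` and `B' = A`. -/
def Concepts {G M : Type*} (I : G → M → Prop) : Set (Set G × Set M) :=
  {p | intentOf I p.1 = p.2 ∧ extentOf I p.2 = p.1}

def K12 (n : ℕ) (m1 m2 : Set (Fin n)) :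
    (Fin n ⊕ Unit) → (Fin n ⊕ Bool) → Prop
  | Sum.inl g, Sum.inl m => g ≠ m
  | Sum.inr _, Sum.inl _ => True
  | Sum.inl g, Sum.inr false => g ∈ m1
  | Sum.inl g, Sum.inr true => g ∈ m2
  | Sum.inr _, Sum.inr _ => False

section Aux

variable {n : ℕ} (m1 m2 : Set (Fin n))

def E1 (A : Set (Fin n)) : Set (Fin n ⊕ Unit) :=
  fun g => match g with | .inl j => j ∈ A | .inr _ => True

def E2 (A : Set (Fin n)) : Set (Fin n ⊕ Unit) :=
  fun g => match g with | .inl j => j ∈ A | .inr _ => False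

def I1 (A : Set (Fin n)) : Set (Fin n ⊕ Bool) :=
  fun m => match m with | .inl j => j ∉ A | .inr _ => False

def I2 (A : Set (Fin n)) : Set (Fin n ⊕ Bool) :=
  fun m => match m with
    | .inl j => j ∉ A
    | .inr false => A ⊆ m1
    | .inr true => A ⊆ m2

lemma intent_E1 (A : Set (Fin n)) :
    intentOf (K12 n m1 m2) (E1 A) = I1 A := by
  ext m
  cases m with
  | inl j =>
    constructor
    · intro h hj
      exact h (Sum.inl j) hj rfl
    · intro hj g hg
      cases g with
      | inl k => exact fun hkj => hj (hkj ▸ hg)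
      | inr u => exact trivial
  | inr b =>
    constructor
    · intro h
      exact h (Sum.inr ()) trivial
    · intro h
      exact h.elim

lemma extent_I1 (A : Set (Fin n)) :
    extentOf (K12 n m1 m2) (I1 A) = E1 A := by
  ext g
  cases g with
  | inl j =>
    constructor
    · intro h
      by_contra hj
      exact h (Sum.inl j) hj rfl
    · intro hj m hm
      cases m with
      | inl k => exact fun hjk => hm (hjk ▸ hj)
      | inr b => exact hm.elim
  | inr u =>
    constructor
    · intro _; exact trivial
    · intro _ m hm
      cases m with
      | inl k => exact trivial
      | inr b => exact hm.elim

lemma intent_E2 (A : Set (Fin n)) :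
    intentOf (K12 n m1 m2) (E2 A) = I2 m1 m2 A := by
  ext m
  cases m with
  | inl j =>
    constructor
    · intro h hj
      exact h (Sum.inl j) hj rfl
    · intro hj g hg
      cases g with
      | inl k => exact fun hkj => hj (hkj ▸ hg)
      | inr u => exact hg.elim
  | inr b =>
    cases b with
    | false =>
      constructor
      · intro h x hx
        exact h (Sum.inl x) hx
      · intro h g hg
        cases g with
        | inl k => exact h hg
        | inr u => exact hg.elim
    | true =>
      constructor
      · intro h x hx
        exact h (Sum.inl x) hx
      · intro h g hg
        cases g with
        | inl k => exact h hg
        | inr u => exact hg.elim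

lemma extent_I2 (A : Set (Fin n)) (h : A ⊆ m1 ∨ A ⊆ m2) :
    extentOf (K12 n m1 m2) (I2 m1 m2 A) = E2 A := by
  ext g
  cases g with
  | inl j =>
    constructor
    · intro hj
      by_contra hjA
      exact hj (Sum.inl j) hjA rfl
    · intro hj m hm
      cases m with
      | inl k => exact fun hjk => hm (hjk ▸ hj)
      | inr b =>
        cases b with
        | false => exact hm hj
        | true => exact hm hj
  | inr u =>
    constructor
    · intro hh
      rcases h with h | h
      · exact (hh (Sum.inr false) h : False)
      · exact (hh (Sum.inr true) h : False)
    · intro hf; exact hf.elim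

lemma c1_mem (A : Set (Fin n)) :
    ((E1 A, I1 A) : Set (Fin n ⊕ Unit) × Set (Fin n ⊕ Bool)) ∈
      Concepts (K12 n m1 m2) :=
  ⟨intent_E1 m1 m2 A, extent_I1 m1 m2 A⟩

lemma c2_mem (A : Set (Fin n)) (h : A ⊆ m1 ∨ A ⊆ m2) :
    ((E2 A, I2 m1 m2 A) : Set (Fin n ⊕ Unit) × Set (Fin n ⊕ Bool)) ∈
      Concepts (K12 n m1 m2) :=
  ⟨intent_E2 m1 m2 A, extent_I2 m1 m2 A h⟩

/-- the parametrizing map -/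
noncomputable def fconc :
    (Set (Fin n) ⊕ {A : Set (Fin n) // A ⊆ m1 ∨ A ⊆ m2}) →
      Set (Fin n ⊕ Unit) × Set (Fin n ⊕ Bool)
  | .inl A => (E1 A, I1 A)
  | .inr ⟨A, _⟩ => (E2 A, I2 m1 m2 A)

lemma E1_inj {A B : Set (Fin n)} (h : E1 A = E1 B) : A = B := by
  ext j
  exact iff_of_eq (congrFun h (Sum.inl j))

lemma E2_inj {A B : Set (Fin n)} (h : E2 A = E2 B) : A = B := by
  ext j
  exact iff_of_eq (congrFun h (Sum.inl j))

lemma fconc_inj : Function.Injective (fconc m1 m2) := by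
  intro x y hxy
  have key : ∀ (A B : Set (Fin n)), E1 A ≠ E2 B := by
    intro A B hAB
    have : Sum.inr () ∈ E1 A := trivial
    rw [hAB] at this
    exact this
  cases x with
  | inl A =>
    cases y with
    | inl B => exact congrArg Sum.inl (E1_inj (congrArg Prod.fst hxy))
    | inr B => exact absurd (congrArg Prod.fst hxy) (key A B.1)
  | inr A =>
    cases y with
    | inl B => exact absurd (congrArg Prod.fst hxy).symm (key B A.1)
    | inr B =>
      obtain ⟨A, hA⟩ := A
      obtain ⟨B, hB⟩ := B
      exact congrArg Sum.inr (Subtype.ext (E2_inj (congrArg Prod.fst hxy)))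

lemma fconc_range : Set.range (fconc m1 m2) = Concepts (K12 n m1 m2) := by
  ext p
  constructor
  · rintro ⟨x, rfl⟩
    cases x with
    | inl A => exact c1_mem m1 m2 A
    | inr A => exact c2_mem m1 m2 A.1 A.2
  · rintro ⟨hint, hext⟩
    obtain ⟨A, B⟩ := p
    simp only at hint hext
    set A0 : Set (Fin n) := {j | Sum.inl j ∈ A} with hA0
    by_cases hg : Sum.inr () ∈ A
    · refine ⟨Sum.inl A0, ?_⟩
      have hA : A = E1 A0 := by
        ext g
        cases g with
        | inl j => exact Iff.rfl
        | inr u => exact ⟨fun _ => trivial, fun _ => hg⟩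
      have hB : B = I1 A0 := by
        rw [← hint, hA, intent_E1]
      simp [fconc, hA, hB]
    · have hA : A = E2 A0 := by
        ext g
        cases g with
        | inl j => exact Iff.rfl
        | inr u => exact ⟨fun h => hg h, fun h => h.elim⟩
      have hB : B = I2 m1 m2 A0 := by
        rw [← hint, hA, intent_E2]
      have hsub : A0 ⊆ m1 ∨ A0 ⊆ m2 := by
        by_contra hc
        push_neg at hc
        apply hg
        rw [← hext]
        intro m hm
        cases m with
        | inl k => exact trivial
        | inr b =>
          rw [hB] at hm
          cases b with
          | false => exact hc.1 hm
          | true => exact hc.2 hm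
      refine ⟨Sum.inr ⟨A0, hsub⟩, ?_⟩
      simp [fconc, hA, hB]

lemma card_powerset_subtype (s : Set (Fin n)) :
    Nat.card {A : Set (Fin n) // A ⊆ s} = 2 ^ s.ncard := by
  letI : Fintype ↥s := Fintype.ofFinite _
  have e1 : {A : Set (Fin n) // A ⊆ s} ≃ Set ↥s := Equiv.Set.powerset s
  rw [Nat.card_congr e1, Nat.card_eq_fintype_card, Fintype.card_set,
    ← Nat.card_eq_fintype_card, Nat.card_coe_set_eq]

end Aux

/-- Let `n > 2` and `m_1', m_2' ⊆ S_n` with `m_1' ∪ m_2' = S_n`,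
`∅ ⊊ m_1', m_2' ⊊ S_n`, and `m_1', m_2'` incomparable. Then
`|𝔅(K_12)| = 2^n + 2^|m_1'| + 2^|m_2'| − 2^|m_1' ∩ m_2'|`. -/
theorem stmt15 (n : ℕ) (hn : 2 < n) (m1 m2 : Set (Fin n))
    (hcov : m1 ∪ m2 = Set.univ)
    (h1ne : m1.Nonempty) (h1pr : m1 ≠ Set.univ)
    (h2ne : m2.Nonempty) (h2pr : m2 ≠ Set.univ)
    (h12 : ¬ m1 ⊆ m2) (h21 : ¬ m2 ⊆ m1) :
    Nat.card (Concepts (K12 n m1 m2)) =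
      2 ^ n + 2 ^ m1.ncard + 2 ^ m2.ncard - 2 ^ (m1 ∩ m2).ncard := by
  have hcard : Nat.card (Concepts (K12 n m1 m2)) =
      Nat.card (Set (Fin n) ⊕ {A : Set (Fin n) // A ⊆ m1 ∨ A ⊆ m2}) := by
    rw [← fconc_range m1 m2]
    exact (Nat.card_range_of_injective (fconc_inj m1 m2)).symm ▸
      (Nat.card_range_of_injective (fconc_inj m1 m2))
  rw [hcard, Nat.card_sum]
  have hset : Nat.card (Set (Fin n)) = 2 ^ n := by
    rw [Nat.card_eq_fintype_card, Fintype.card_set, Fintype.card_fin]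
  -- union subtype
  have hu : {A : Set (Fin n) // A ⊆ m1 ∨ A ⊆ m2} =
      ↥({A : Set (Fin n) | A ⊆ m1} ∪ {A : Set (Fin n) | A ⊆ m2}) := rfl
  have hinter : {A : Set (Fin n) | A ⊆ m1} ∩ {A : Set (Fin n) | A ⊆ m2} =
      {A : Set (Fin n) | A ⊆ m1 ∩ m2} := by
    ext A; simp [Set.subset_inter_iff]
  have hn1 : Nat.card {A : Set (Fin n) // A ⊆ m1 ∨ A ⊆ m2} =
      ({A : Set (Fin n) | A ⊆ m1} ∪ {A : Set (Fin n) | A ⊆ m2}).ncard := by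
    rw [hu, Nat.card_coe_set_eq]
  have hk1 : ({A : Set (Fin n) | A ⊆ m1}).ncard = 2 ^ m1.ncard := by
    rw [← Nat.card_coe_set_eq]
    exact card_powerset_subtype m1
  have hk2 : ({A : Set (Fin n) | A ⊆ m2}).ncard = 2 ^ m2.ncard := by
    rw [← Nat.card_coe_set_eq]
    exact card_powerset_subtype m2
  have hk12 : ({A : Set (Fin n) | A ⊆ m1 ∩ m2}).ncard = 2 ^ (m1 ∩ m2).ncard := by
    rw [← Nat.card_coe_set_eq]
    exact card_powerset_subtype (m1 ∩ m2)
  have hie := Set.ncard_union_add_ncard_inter {A : Set (Fin n) | A ⊆ m1}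
      {A : Set (Fin n) | A ⊆ m2} (Set.toFinite _) (Set.toFinite _)
  rw [hinter, hk1, hk2, hk12] at hie
  have hle : 2 ^ (m1 ∩ m2).ncard ≤ 2 ^ m1.ncard :=
    Nat.pow_le_pow_right (by norm_num)
      (Set.ncard_le_ncard Set.inter_subset_left (Set.toFinite _))
  rw [hset, hn1]
  omega
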